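/- (Guaranteed privacy of the functional-perturbation mechanism, per agent.) Let n ∈ ℕ, let x̲ ≤ x̄ in Fin n → ℝ with the box X₀ = Set.Icc x̲ x̄ nonempty, let δ > 0, and let f, f' : (Fin n → ℝ) → ℝ be continuous functions with |f' x − f x| ≤ δ for all x ∈ X₀. Let m, m̃ : Fin n → ℝ and set m̂ = m + m̃. Define h x = f x − ∑ j, m j * x j and h' x = f' x − ∑ j, m j * x j; let h̲ = sInf (h '' X₀), h̄ = sSup (h '' X₀), h̲' = sInf (h' '' X₀), h̄' = sSup (h' '' X₀). Define the intervals M(f) = Set.Icc (h̲ + ∑ j, (m̂⁺ j * x̲ j − m̂⁻ j * x̄ j)) (h̄ + ∑ j, (m̂⁺ j * x̄ j − m̂⁻ j * x̲ j)) and M(f') = Set.Icc (h̲' + ∑ j, (m̂⁺ j * x̲ j − m̂⁻ j * x̄ j)) (h̄' + ∑ j, (m̂⁺ j * x̄ j − m̂⁻ j * x̲ j)). Let D = (h̄ − h̲) + ∑ j, |m̂ j| * (x̄ j − x̲ j), assume D > 0, and set ε = Real.log ((D + 2δ)/D) / δ. Then for every a ≤ b in ℝ, Metric.diam (M(f') ∩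 Set.Icc a b) ≤ Real.exp (ε * δ) * Metric.diam (M(f)). -/

import Mathlib

/-- Guaranteed privacy of the functional-perturbation mechanism, per agent:
with the interval over-approximations `M(f)`, `M(f')` of the ranges of the perturbed
objectives constructed from the decompositions `f x = h x + ∑ j, m j * x j`,
`D = (h̄ − h̲) + ∑ j, |m̂ j| * (x̄ j − x̲ j) > 0` and `ε = log((D + 2δ)/D)/δ`,
for every interval `[a, b]`,
`diam (M(f') ∩ [a,b]) ≤ exp (ε * δ) * diam (M(f))`. -/
theorem stmt_6 (n : ℕ) (xl xu : Fin n → ℝ) (hle : xl ≤ xu)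
    (hne : (Set.Icc xl xu).Nonempty)
    (δ : ℝ) (hδ : 0 < δ)
    (f f' : (Fin n → ℝ) → ℝ) (hf : Continuous f) (hf' : Continuous f')
    (hadj : ∀ x ∈ Set.Icc xl xu, |f' x - f x| ≤ δ)
    (m mt mh : Fin n → ℝ) (hmh : mh = m + mt)
    (h h' : (Fin n → ℝ) → ℝ)
    (hdef : ∀ x, h x = f x - ∑ j, m j * x j)
    (hdef' : ∀ x, h' x = f' x - ∑ j, m j * x j)
    (hl hu hl' hu' : ℝ)
    (hhl : hl = sInf (h '' Set.Icc xl xu)) (hhu : hu = sSup (h '' Set.Icc xl xu))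
    (hhl' : hl' = sInf (h' '' Set.Icc xl xu)) (hhu' : hu' = sSup (h' '' Set.Icc xl xu))
    (D : ℝ) (hD : D = (hu - hl) + ∑ j, |mh j| * (xu j - xl j)) (hDpos : 0 < D)
    (ε : ℝ) (hε : ε = Real.log ((D + 2 * δ) / D) / δ) :
    ∀ a b : ℝ, a ≤ b →
      Metric.diam
        (Set.Icc (hl' + ∑ j, (max (mh j) 0 * xl j - (max (mh j) 0 - mh j) * xu j))
                 (hu' + ∑ j, (max (mh j) 0 * xu j - (max (mh j) 0 - mh j) * xl j)) ∩
          Set.Icc a b) ≤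
      Real.exp (ε * δ) *
        Metric.diam
          (Set.Icc (hl + ∑ j, (max (mh j) 0 * xl j - (max (mh j) 0 - mh j) * xu j))
                   (hu + ∑ j, (max (mh j) 0 * xu j - (max (mh j) 0 - mh j) * xl j))) := by
  intro a b hab
  -- continuity of h, h'
  have hch : Continuous h := by
    have : h = fun x => f x - ∑ j, m j * x j := funext hdef
    rw [this]
    exact hf.sub (continuous_finset_sum _ fun j _ =>
      (continuous_const.mul (continuous_apply j)))
  have hch' : Continuous h' := by
    have : h' = fun x => f' x - ∑ j, m j * x j := funext hdef'
    rw [this]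
    exact hf'.sub (continuous_finset_sum _ fun j _ =>
      (continuous_const.mul (continuous_apply j)))
  have hKh : IsCompact (h '' Set.Icc xl xu) := isCompact_Icc.image hch
  have hKh' : IsCompact (h' '' Set.Icc xl xu) := isCompact_Icc.image hch'
  have hneh : (h '' Set.Icc xl xu).Nonempty := hne.image _
  have hneh' : (h' '' Set.Icc xl xu).Nonempty := hne.image _
  have hlu : hl ≤ hu := by
    rw [hhl, hhu]
    exact csInf_le_csSup hneh hKh.bddBelow hKh.bddAbove
  -- sums
  have hBA : (∑ j, (max (mh j) 0 * xu j - (max (mh j) 0 - mh j) * xl j)) -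
      (∑ j, (max (mh j) 0 * xl j - (max (mh j) 0 - mh j) * xu j)) =
      ∑ j, |mh j| * (xu j - xl j) := by
    rw [← Finset.sum_sub_distrib]
    refine Finset.sum_congr rfl fun j _ => ?_
    rcases le_total 0 (mh j) with hj | hj
    · rw [abs_of_nonneg hj, max_eq_left hj]; ring
    · rw [abs_of_nonpos hj, max_eq_right hj]; ring
  have hSnn : 0 ≤ ∑ j, |mh j| * (xu j - xl j) :=
    Finset.sum_nonneg fun j _ => mul_nonneg (abs_nonneg _) (sub_nonneg.2 (hle j))
  -- bounds on hl', hu'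
  have hu'le : hu' ≤ hu + δ := by
    rw [hhu']
    refine csSup_le hneh' ?_
    rintro y ⟨x, hx, rfl⟩
    have h1 : f' x - f x ≤ δ := (abs_le.1 (hadj x hx)).2
    have h2 : h x ≤ hu := by
      rw [hhu]; exact le_csSup hKh.bddAbove ⟨x, hx, rfl⟩
    have := hdef x; have := hdef' x
    nlinarith [hdef x, hdef' x]
  have hl'ge : hl - δ ≤ hl' := by
    rw [hhl']
    refine le_csInf hneh' ?_
    rintro y ⟨x, hx, rfl⟩
    have h1 : -(δ) ≤ f' x - f x := (abs_le.1 (hadj x hx)).1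
    have h2 : hl ≤ h x := by
      rw [hhl]; exact csInf_le hKh.bddBelow ⟨x, hx, rfl⟩
    nlinarith [hdef x, hdef' x]
  -- RHS value
  have hfrac : 0 < (D + 2 * δ) / D := div_pos (by linarith) hDpos
  have hexp : Real.exp (ε * δ) = (D + 2 * δ) / D := by
    rw [hε, div_mul_cancel₀ _ (ne_of_gt hδ), Real.exp_log hfrac]
  have hdiamM : Metric.diam
      (Set.Icc (hl + ∑ j, (max (mh j) 0 * xl j - (max (mh j) 0 - mh j) * xu j))
        (hu + ∑ j, (max (mh j) 0 * xu j - (max (mh j) 0 - mh j) * xl j))) = D := by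
    rw [Real.diam_Icc (by linarith), hD]; linarith
  rw [hdiamM, hexp, div_mul_cancel₀ _ (ne_of_gt hDpos)]
  -- LHS bound
  have hsub : (Set.Icc (hl' + ∑ j, (max (mh j) 0 * xl j - (max (mh j) 0 - mh j) * xu j))
      (hu' + ∑ j, (max (mh j) 0 * xu j - (max (mh j) 0 - mh j) * xl j)) ∩
      Set.Icc a b) ⊆
      Set.Icc (hl' + ∑ j, (max (mh j) 0 * xl j - (max (mh j) 0 - mh j) * xu j))
      (hu' + ∑ j, (max (mh j) 0 * xu j - (max (mh j) 0 - mh j) * xl j)) :=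
    Set.inter_subset_left
  refine le_trans (Metric.diam_mono hsub (Metric.isBounded_Icc _ _)) ?_
  by_cases hord : hl' + ∑ j, (max (mh j) 0 * xl j - (max (mh j) 0 - mh j) * xu j) ≤
      hu' + ∑ j, (max (mh j) 0 * xu j - (max (mh j) 0 - mh j) * xl j)
  · rw [Real.diam_Icc hord]
    have := hBA
    rw [hD]; linarith
  · rw [Set.Icc_eq_empty hord, Metric.diam_empty]
    linarith
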